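/- Let g be a Lie algebra over a field of characteristic zero. For all x, u, v in g and natural numbers n ≥ 1, the directional derivative of y ↦ ad(y)^n at x in direction u, applied to v, equals ∑_{i=0}^{n−1} C(n, i+1) [ad(x)^i u, ad(x)^{n−i−1} v]. Equivalently, ∑_{i=0}^{n−1} ad(x)^i [u, ad(x)^{n−i−1} v] = ∑_{i=0}^{n−1} C(n, i+1) [ad(x)^i u, ad(x)^{n−i−1} v]. -/

import Mathlib

open Finset

/-- Leibniz rule for powers of `ad`. -/
lemma ad_pow_lie {K L : Type*} [Field K] [CharZero K] [LieRing L] [LieAlgebra K L]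
    (x a b : L) (m : ℕ) :
    ((LieAlgebra.ad K L x) ^ m) ⁅a, b⁆
      = ∑ j ∈ Finset.range (m + 1),
          m.choose j • ⁅((LieAlgebra.ad K L x) ^ j) a, ((LieAlgebra.ad K L x) ^ (m - j)) b⁆ := by
  have h := LieDerivation.iterate_apply_lie' (LieDerivation.ad K L x) m a b
  have hcoe : ⇑(LieDerivation.ad K L x) = ⇑(LieAlgebra.ad K L x) := by
    ext y; simp
  simpa [hcoe, Module.End.pow_apply] using h

/-- The directional derivative of `y ↦ ad(y)^n` at `x` in direction `u`, applied to `v`,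
i.e. `∑_{i=0}^{n−1} ad(x)^i [u, ad(x)^{n−i−1} v]`, equals
`∑_{i=0}^{n−1} C(n, i+1) [ad(x)^i u, ad(x)^{n−i−1} v]`, for `n ≥ 1`. -/
theorem stmt_3 {K L : Type*} [Field K] [CharZero K] [LieRing L] [LieAlgebra K L]
    (x u v : L) (n : ℕ) (hn : 1 ≤ n) :
    ∑ i ∈ Finset.range n,
        ((LieAlgebra.ad K L x) ^ i) ⁅u, ((LieAlgebra.ad K L x) ^ (n - i - 1)) v⁆
      = ∑ i ∈ Finset.range n,
          n.choose (i + 1) •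
            ⁅((LieAlgebra.ad K L x) ^ i) u, ((LieAlgebra.ad K L x) ^ (n - i - 1)) v⁆ := by
  set D := LieAlgebra.ad K L x with hD
  calc
    ∑ i ∈ range n, (D ^ i) ⁅u, (D ^ (n - i - 1)) v⁆
        = ∑ i ∈ range n, ∑ j ∈ range (i + 1),
            i.choose j • ⁅(D ^ j) u, (D ^ (n - j - 1)) v⁆ := by
          refine Finset.sum_congr rfl fun i hi => ?_
          rw [ad_pow_lie]
          refine Finset.sum_congr rfl fun j hj => ?_
          have hi' : i < n := Finset.mem_range.mp hi
          have hj' : j ≤ i := Nat.lt_succ_iff.mp (Finset.mem_range.mp hj)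
          rw [← Module.End.mul_apply, ← pow_add,
            show i - j + (n - i - 1) = n - j - 1 from by omega]
    _ = ∑ j ∈ range n, ∑ i ∈ Finset.Ico j n,
            i.choose j • ⁅(D ^ j) u, (D ^ (n - j - 1)) v⁆ := by
          refine Finset.sum_comm' ?_
          intro i j
          simp only [Finset.mem_range, Finset.mem_Ico]
          omega
    _ = ∑ j ∈ range n, n.choose (j + 1) • ⁅(D ^ j) u, (D ^ (n - j - 1)) v⁆ := by
          refine Finset.sum_congr rfl fun j hj => ?_
          rw [← Finset.sum_smul]
          have : Finset.Ico j n = Finset.Icc j (n - 1) := by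
            rw [← Finset.Ico_add_one_right_eq_Icc, show n - 1 + 1 = n from by omega]
          rw [this, Nat.sum_Icc_choose, show n - 1 + 1 = n from by omega]
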